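/- Every finite potent endomorphism of a k-vector space is the sum of a nilpotent endomorphism and an endomorphism with finite-dimensional range. -/

import Mathlib

/-- An endomorphism is finite potent if some power has finite-dimensional range. -/
def IsFinitePotent {k V : Type*} [Field k] [AddCommGroup V] [Module k V]
    (φ : V →ₗ[k] V) : Prop :=
  ∃ n : ℕ, FiniteDimensional k (LinearMap.range (φ ^ n))

/-- `c` is a value of Tate's trace of `φ`: the ordinary trace of the restriction of `φ` to
any finite-dimensional `φ`-invariant subspace `W` with `φⁿ V ⊆ W` for some `n` equals `c`. -/
def TateTraceSpec {k V : Type*} [Field k] [AddCommGroup V] [Module k V]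
    (φ : V →ₗ[k] V) (c : k) : Prop :=
  ∀ (W : Submodule k V) (hW : ∀ x ∈ W, φ x ∈ W), FiniteDimensional k W →
    (∃ n : ℕ, LinearMap.range (φ ^ n) ≤ W) →
    LinearMap.trace k W (φ.restrict hW) = c

open Classical in
/-- Tate's trace of a finite potent endomorphism. -/
noncomputable def tateTrace {k V : Type*} [Field k] [AddCommGroup V] [Module k V]
    (φ : V →ₗ[k] V) : k :=
  if h : ∃ c, TateTraceSpec φ c then h.choose else 0

theorem finitePotent_eq_nilpotent_add_finiteRank
    {k V : Type*} [Field k] [AddCommGroup V] [Module k V]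
    (φ : V →ₗ[k] V) (hφ : IsFinitePotent φ) :
    ∃ N F : V →ₗ[k] V, IsNilpotent N ∧ FiniteDimensional k (LinearMap.range F) ∧
      φ = N + F := by
  obtain ⟨n, hn⟩ := hφ
  set W : Submodule k V := LinearMap.range (φ ^ n) with hWdef
  -- W is φ-invariant
  have hWinv : ∀ x ∈ W, φ x ∈ W := by
    rintro x ⟨y, rfl⟩
    exact ⟨φ y, by simp [← Module.End.mul_apply, ← pow_succ, ← pow_succ']⟩
  -- a complement of W and the projection p onto W
  obtain ⟨U, hU⟩ := Submodule.exists_isCompl W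
  set p : V →ₗ[k] V := W.subtype ∘ₗ W.linearProjOfIsCompl U hU with hp
  have hpW : ∀ x, p x ∈ W := fun x => (W.linearProjOfIsCompl U hU x).2
  have hpid : ∀ x ∈ W, p x = x := fun x hx => by
    simp [hp, Submodule.linearProjOfIsCompl_apply_left hU ⟨x, hx⟩]
    exact congrArg Subtype.val (Submodule.linearProjOfIsCompl_apply_left hU ⟨x, hx⟩)
  set q : V →ₗ[k] V := LinearMap.id - p with hq
  have hqW : ∀ x ∈ W, q x = 0 := fun x hx => by
    simp [hq, hpid x hx]
  have hqq : ∀ x, q (q x) = q x := fun x => by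
    have : p (q x) = 0 := by
      have := hpW x
      simp [hq, hpid _ this]
    simp [hq] at this ⊢
    simpa [sub_eq_self] using this
  refine ⟨φ ∘ₗ q, φ ∘ₗ p, ?_, ?_, ?_⟩
  · -- nilpotent
    refine ⟨n + 1, ?_⟩
    have key : ∀ m x, ((φ ∘ₗ q) ^ (m + 1)) x = φ (q ((φ ^ m) (q x))) := by
      intro m
      induction m with
      | zero => intro x; simp [LinearMap.comp_apply, hqq]
      | succ m ih =>
        intro x
        set z := (φ ^ m) (q x) with hz
        have h1 : q (φ (q z)) = q (φ z) := by
          have h2 : φ (p z) ∈ W := hWinv _ (hpW z)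
          have h3 : q (φ (p z)) = 0 := hqW _ h2
          have : q z = z - p z := by simp [hq]
          rw [this, map_sub, map_sub, h3, sub_zero]
        have h4 : (φ ^ (m + 1)) (q x) = φ z := by
          rw [pow_succ', Module.End.mul_apply]
        rw [show m + 1 + 1 = (m + 1) + 1 from rfl, pow_succ', Module.End.mul_apply, ih x,
          h4]
        simp only [LinearMap.comp_apply, ← hz, h1]
    ext x
    have hWmem : (φ ^ n) (q x) ∈ W := ⟨q x, rfl⟩
    simp [key n x, hqW _ hWmem]
  · -- finite rank
    have hle : LinearMap.range (φ ∘ₗ p) ≤ W := by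
      rintro y ⟨x, rfl⟩
      exact hWinv _ (hpW x)
    exact Submodule.finiteDimensional_of_le hle
  · ext x
    simp [hq, LinearMap.comp_apply]
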